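/- For the Dynkin tree D_n (n ≥ 4), the Alexander polynomial satisfies Δ(D_n) = t^{−n/2}(t^n − t^{n−1} + (−1)^{n−1} t + (−1)^n). -/

import Mathlib

open scoped Classical

noncomputable section

abbrev K : Type := FractionRing (MvPolynomial Bool ℚ)

/-- The element `t^{1/2}`. -/
def S : K := algebraMap (MvPolynomial Bool ℚ) K (MvPolynomial.X false)

/-- The variable `t = (t^{1/2})²` of the Alexander polynomial. -/
def T : K := S ^ 2

/-- A rule assigning a value to every finite simple graph. -/
abbrev GraphFun : Type 1 :=
  ∀ (V : Type) [Fintype V] [DecidableEq V], SimpleGraph V → K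

/-- `v` is a leaf whose unique neighbor is `w`. -/
def IsLeaf {V : Type} (G : SimpleGraph V) (v w : V) : Prop :=
  G.neighborSet v = {w}

/-- The defining recursion of the Alexander polynomial of a forest:
value `1` on the empty graph, `t^{1/2} − t^{−1/2}` on a single vertex,
the leaf-removal recursion `Δ(Q) = (t^{1/2}−t^{−1/2})Δ(Q−v) + Δ(Q−{v,ṽ})`,
and multiplicativity over disjoint unions. -/
def AlexRules (f : GraphFun) : Prop :=
  (∀ (V : Type) [Fintype V] [DecidableEq V] (G : SimpleGraph V),
      IsEmpty V → f V G = 1) ∧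
  (∀ (V : Type) [Fintype V] [DecidableEq V] (G : SimpleGraph V),
      Fintype.card V = 1 → f V G = S - S⁻¹) ∧
  (∀ (V : Type) [Fintype V] [DecidableEq V] (G : SimpleGraph V),
      G.IsAcyclic → ∀ v w : V, IsLeaf G v w →
      f V G = (S - S⁻¹) * f ↥{x : V | x ≠ v} (G.induce {x : V | x ≠ v}) +
        f ↥{x : V | x ≠ v ∧ x ≠ w} (G.induce {x : V | x ≠ v ∧ x ≠ w})) ∧
  (∀ (V : Type) [Fintype V] [DecidableEq V] (G : SimpleGraph V),
      G.IsAcyclic → ∀ s : Set V, (∀ x ∈ s, ∀ y ∉ s, ¬ G.Adj x y) →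
      f V G = f ↥s (G.induce s) * f ↥sᶜ (G.induce sᶜ))

/-- The tree `D_n`: a path on vertices `0, …, n−3` together with two extra
leaves `n−2` and `n−1` attached to the end vertex `0` of the path. -/
def Dgraph (n : ℕ) : SimpleGraph (Fin n) :=
  SimpleGraph.fromRel (fun i j =>
    ((i : ℕ) + 1 = (j : ℕ) ∧ (j : ℕ) ≤ n - 3) ∨
    ((i : ℕ) = 0 ∧ (j : ℕ) = n - 2) ∨
    ((i : ℕ) = 0 ∧ (j : ℕ) = n - 1))

lemma S_ne_zero : S ≠ 0 := by
  simp only [S, ne_eq, map_eq_zero_iff _ (IsFractionRing.injective (MvPolynomial Bool ℚ) K)]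
  exact MvPolynomial.X_ne_zero false

lemma SpS_ne_zero : S + S⁻¹ ≠ 0 := by
  intro h
  have h2 : S * (S + S⁻¹) = S ^ 2 + 1 := by
    field_simp [S_ne_zero]
  rw [h, mul_zero] at h2
  have h3 : (algebraMap (MvPolynomial Bool ℚ) K) (MvPolynomial.X false ^ 2 + 1) = 0 := by
    rw [map_add, map_pow, map_one]
    simpa [S] using h2.symm
  rw [map_eq_zero_iff _ (IsFractionRing.injective (MvPolynomial Bool ℚ) K)] at h3
  have := congrArg (MvPolynomial.eval (fun _ => (0:ℚ))) h3
  simp at this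

def pseq : ℕ → K
  | 0 => 1
  | 1 => S - S⁻¹
  | (m+2) => (S - S⁻¹) * pseq (m+1) + pseq m

lemma pseq_closed (m : ℕ) :
    (S + S⁻¹) * pseq m = S ^ (m+1) - (-1:K) ^ (m+1) * (S⁻¹) ^ (m+1) := by
  induction m using Nat.strong_induction_on with
  | _ m IH =>
    match m with
    | 0 => simp [pseq]
    | 1 =>
      show (S + S⁻¹) * (S - S⁻¹) = S ^ 2 - (-1:K)^2 * (S⁻¹)^2
      have hS := S_ne_zero
      field_simp
      ring
    | (m+2) =>
      have h1 := IH (m+1) (by omega)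
      have h0 := IH m (by omega)
      show (S + S⁻¹) * ((S - S⁻¹) * pseq (m+1) + pseq m) = _
      rw [mul_add, mul_left_comm, h1, h0]
      have hS := S_ne_zero
      simp only [inv_pow]
      field_simp
      ring

lemma acyclic_of_label {V : Type} {G : SimpleGraph V} (L : V → ℕ)
    (hinj : Function.Injective L)
    (huniq : ∀ u a b : V, G.Adj u a → G.Adj u b → L a < L u → L b < L u → a = b) :
    G.IsAcyclic := by
  intro x c hc
  obtain ⟨u, hu, hmax⟩ := Finset.exists_max_image c.support.toFinset L
    ⟨x, by simp [List.mem_toFinset]⟩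
  rw [List.mem_toFinset] at hu
  have hc' : (c.rotate u hu).IsCycle := hc.rotate hu
  have hsup : ∀ y ∈ (c.rotate u hu).support, L y ≤ L u := by
    intro y hy
    apply hmax
    rw [List.mem_toFinset]
    rw [(c.rotate u hu).support_eq_cons] at hy
    rcases List.mem_cons.mp hy with h | h
    · exact h ▸ hu
    · exact List.mem_of_mem_tail ((SimpleGraph.Walk.support_rotate c u hu).mem_iff.mp h)
  have h3 : 3 ≤ (c.rotate u hu).length := hc'.three_le_length
  have hnn : ¬ (c.rotate u hu).Nil := by rw [SimpleGraph.Walk.not_nil_iff_lt_length]; omega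
  obtain ⟨a, hua, q, hq⟩ := SimpleGraph.Walk.not_nil_iff.mp hnn
  rw [hq] at hc' h3 hsup
  obtain ⟨hqpath, -⟩ := (SimpleGraph.Walk.cons_isCycle_iff q hua).mp hc'
  have hql : 2 ≤ q.length := by simp only [SimpleGraph.Walk.length_cons] at h3; omega
  have hnn2 : ¬ q.reverse.Nil := by rw [SimpleGraph.Walk.not_nil_iff_lt_length]; simp; omega
  obtain ⟨b, hub, r, hr⟩ := SimpleGraph.Walk.not_nil_iff.mp hnn2
  have hamem : a ∈ (SimpleGraph.Walk.cons hua q).support := by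
    rw [SimpleGraph.Walk.support_cons]
    exact List.mem_cons_of_mem _ q.start_mem_support
  have hbmem : b ∈ (SimpleGraph.Walk.cons hua q).support := by
    rw [SimpleGraph.Walk.support_cons]
    refine List.mem_cons_of_mem _ ?_
    have : b ∈ q.reverse.support := by
      rw [hr, SimpleGraph.Walk.support_cons]
      exact List.mem_cons_of_mem _ r.start_mem_support
    rwa [SimpleGraph.Walk.support_reverse, List.mem_reverse] at this
  have hlta : L a < L u := lt_of_le_of_ne (hsup a hamem) (fun h => hua.ne' (hinj h))
  have hltb : L b < L u := lt_of_le_of_ne (hsup b hbmem) (fun h => hub.ne' (hinj h))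
  have hab : a = b := huniq u a b hua hub hlta hltb
  subst hab
  have hrpath : q.reverse.IsPath := q.isPath_reverse_iff.mpr hqpath
  rw [hr] at hrpath
  have hrp : r.IsPath := hrpath.of_cons
  rw [SimpleGraph.Walk.isPath_iff_eq_nil] at hrp
  have hlen : q.reverse.length = r.length + 1 := by rw [hr]; simp
  rw [hrp] at hlen
  simp at hlen
  omega

lemma isAcyclic_induce {V : Type} {G : SimpleGraph V} (h : G.IsAcyclic) (s : Set V) :
    (G.induce s).IsAcyclic := by
  intro x c hc
  exact h (c.map (SimpleGraph.Embedding.induce (G := G) s).toHom)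
    (hc.map (SimpleGraph.Embedding.induce (G := G) s).injective)

lemma path_val (f : GraphFun) (hf : AlexRules f) :
    ∀ (m : ℕ) (V : Type) [Fintype V] [DecidableEq V] (G : SimpleGraph V),
      G.IsAcyclic → ∀ (g : Fin m → V), Function.Bijective g →
      (∀ i j : Fin m, G.Adj (g i) (g j) ↔ (i:ℕ)+1 = (j:ℕ) ∨ (j:ℕ)+1 = (i:ℕ)) →
      f V G = pseq m := by
  intro m
  induction m using Nat.strong_induction_on with
  | _ m IH =>
  match m with
  | 0 =>
    intro V _ _ G hac g hb hadj
    exact hf.1 V G ⟨fun v => (hb.2 v).choose.elim0⟩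
  | 1 =>
    intro V _ _ G hac g hb hadj
    refine hf.2.1 V G (Fintype.card_eq_one_iff.mpr ⟨g 0, fun y => ?_⟩)
    obtain ⟨i, rfl⟩ := hb.2 y
    exact congrArg g (Subsingleton.elim i 0)
  | (m+2) =>
    intro V _ _ G hac g hb hadj
    have hm1 : m+1 < m+2 := by omega
    have hm0 : m < m+2 := by omega
    set v : V := g ⟨m+1, hm1⟩ with hv
    set w : V := g ⟨m, hm0⟩ with hw
    have hgne : ∀ (i : Fin (m+2)) (j : Fin (m+2)), (i:ℕ) ≠ (j:ℕ) → g i ≠ g j := by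
      intro i j hij h
      exact hij (congrArg Fin.val (hb.1 h))
    have hleaf : IsLeaf G v w := by
      unfold IsLeaf
      ext x
      simp only [SimpleGraph.mem_neighborSet, Set.mem_singleton_iff]
      constructor
      · intro hx
        obtain ⟨j, rfl⟩ := hb.2 x
        have h1 := (hadj ⟨m+1, hm1⟩ j).mp hx
        have hj : j = ⟨m, hm0⟩ := by
          apply Fin.ext
          have := j.2
          simp only [Fin.val_mk] at h1 ⊢
          omega
        rw [hj, hw]
      · rintro rfl
        rw [hv, hw]
        exact (hadj _ _).mpr (by simp)
    rw [hf.2.2.1 V G hac v w hleaf]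
    -- the path on m+1 vertices
    have hA : f ↥{x : V | x ≠ v} (G.induce {x : V | x ≠ v}) = pseq (m+1) := by
      have mem1 : ∀ i : Fin (m+1), g ⟨i.1, by omega⟩ ∈ {x : V | x ≠ v} := by
        intro i
        exact hgne _ _ (by have := i.2; simp; omega)
      refine IH (m+1) (by omega) _ _ (isAcyclic_induce hac _)
        (fun i => ⟨g ⟨i.1, by omega⟩, mem1 i⟩) ⟨?_, ?_⟩ ?_
      · intro i j hij
        have h2 := hb.1 (Subtype.ext_iff.mp hij)
        simp only [Fin.ext_iff, Fin.val_mk] at h2 ⊢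
        exact h2
      · rintro ⟨x, hx⟩
        obtain ⟨j, rfl⟩ := hb.2 x
        have hj : j.1 < m+1 := by
          have := j.2
          rcases Nat.lt_or_ge j.1 (m+1) with h | h
          · exact h
          · exfalso; apply hx; rw [hv]; congr 1; exact Fin.ext (by simp only [Fin.val_mk]; omega)
        exact ⟨⟨j.1, hj⟩, Subtype.ext (congrArg g (Fin.ext rfl))⟩
      · intro i j
        simpa using hadj ⟨i.1, by omega⟩ ⟨j.1, by omega⟩
    -- the path on m vertices
    have hB : f ↥{x : V | x ≠ v ∧ x ≠ w} (G.induce {x : V | x ≠ v ∧ x ≠ w}) = pseq m := by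
      have mem2 : ∀ i : Fin m, g ⟨i.1, by omega⟩ ∈ {x : V | x ≠ v ∧ x ≠ w} := by
        intro i
        refine ⟨hgne _ _ ?_, hgne _ _ ?_⟩ <;> · have := i.2; simp; omega
      refine IH m (by omega) _ _ (isAcyclic_induce hac _)
        (fun i => ⟨g ⟨i.1, by omega⟩, mem2 i⟩) ⟨?_, ?_⟩ ?_
      · intro i j hij
        have h2 := hb.1 (Subtype.ext_iff.mp hij)
        simp only [Fin.ext_iff, Fin.val_mk] at h2 ⊢
        exact h2
      · rintro ⟨x, ⟨hx1, hx2⟩⟩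
        obtain ⟨j, rfl⟩ := hb.2 x
        have hj : j.1 < m := by
          have := j.2
          rcases Nat.lt_or_ge j.1 m with h | h
          · exact h
          · exfalso
            rcases Nat.eq_or_lt_of_le h with h' | h'
            · apply hx2; rw [hw]; congr 1; exact Fin.ext h'.symm
            · apply hx1; rw [hv]; congr 1; exact Fin.ext (by simp only [Fin.val_mk]; omega)
        exact ⟨⟨j.1, hj⟩, Subtype.ext (congrArg g (Fin.ext rfl))⟩
      · intro i j
        simpa using hadj ⟨i.1, by omega⟩ ⟨j.1, by omega⟩
    rw [hA, hB]
    rfl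

set_option maxHeartbeats 8000000 in
/-- `Δ(D_n) = t^{−n/2}(t^n − t^{n−1} + (−1)^{n−1} t + (−1)^n)` for `n ≥ 4`. -/
theorem alexander_Dn (f : GraphFun) (hf : AlexRules f) (n : ℕ) (hn : 4 ≤ n) :
    f (Fin n) (Dgraph n) =
      (S⁻¹) ^ n * (T ^ n - T ^ (n - 1) + (-1 : K) ^ (n - 1) * T + (-1 : K) ^ n) := by
  have key : ∀ {V : Type} (i1 i2 : Fintype V) (d1 d2 : DecidableEq V) (G : SimpleGraph V),
      @f V i1 d1 G = @f V i2 d2 G := by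
    intro V i1 i2 d1 d2 G
    congr 1 <;> [skip; exact Subsingleton.elim _ _] <;> exact Subsingleton.elim _ _
  have hDadj : ∀ a b : Fin n, (Dgraph n).Adj a b ↔
      (((a:ℕ)+1 = (b:ℕ) ∧ (b:ℕ) ≤ n-3) ∨ ((b:ℕ)+1 = (a:ℕ) ∧ (a:ℕ) ≤ n-3) ∨
       ((a:ℕ)=0 ∧ ((b:ℕ)=n-2 ∨ (b:ℕ)=n-1)) ∨ ((b:ℕ)=0 ∧ ((a:ℕ)=n-2 ∨ (a:ℕ)=n-1))) := by
    intro a b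
    rw [Dgraph, SimpleGraph.fromRel_adj, ne_eq, Fin.ext_iff]
    omega
  have hac : (Dgraph n).IsAcyclic := by
    apply acyclic_of_label (fun x : Fin n => (x:ℕ)) (fun a b h => Fin.ext h)
    intro u a b h1 h2 hl1 hl2
    rw [hDadj] at h1 h2
    exact Fin.ext (by omega)
  obtain ⟨v, hv⟩ : ∃ v : Fin n, v = ⟨n-1, by omega⟩ := ⟨_, rfl⟩
  obtain ⟨w, hw⟩ : ∃ w : Fin n, w = ⟨0, by omega⟩ := ⟨_, rfl⟩
  have hleaf : IsLeaf (Dgraph n) v w := by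
    unfold IsLeaf
    ext x
    have := x.2
    simp only [SimpleGraph.mem_neighborSet, Set.mem_singleton_iff, hDadj, hv, hw,
      Fin.ext_iff, Fin.val_mk, or_true, and_true, true_and, or_false, false_or,
      and_false, false_and, true_or]
    omega
  rw [hf.2.2.1 (Fin n) (Dgraph n) hac v w hleaf]
  have hA : f ↥{x : Fin n | x ≠ v} ((Dgraph n).induce {x : Fin n | x ≠ v}) = pseq (n-1) := by
    refine path_val f hf (n-1) _ _ (isAcyclic_induce hac _)
      (fun i => ⟨⟨if (i:ℕ) = 0 then n-2 else (i:ℕ)-1, by have := i.2; split_ifs <;> omega⟩,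
        by
          have := i.2
          simp only [Set.mem_setOf_eq, hv, ne_eq, Fin.ext_iff, Fin.val_mk]
          split_ifs <;> omega⟩) ⟨?_, ?_⟩ ?_
    · intro i j hij
      have hi := i.2; have hj := j.2
      simp only [Subtype.mk.injEq, Fin.mk.injEq] at hij
      apply Fin.ext
      split_ifs at hij <;> omega
    · rintro ⟨x, hx⟩
      have hxv : (x:ℕ) ≠ n-1 := by
        intro h; apply hx; rw [hv]; exact Fin.ext (by simpa using h)
      have hxlt := x.2
      rcases eq_or_ne (x:ℕ) (n-2) with h | h
      · refine ⟨⟨0, by omega⟩, Subtype.ext (Fin.ext ?_)⟩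
        simpa using h.symm
      · refine ⟨⟨(x:ℕ)+1, by omega⟩, Subtype.ext (Fin.ext ?_)⟩
        simp only [Fin.val_mk]
        rw [if_neg (by omega)]
        omega
    · intro i j
      have hi := i.2; have hj := j.2
      simp only [SimpleGraph.comap_adj, Function.Embedding.coe_subtype]
      rw [hDadj]
      simp only [Fin.val_mk]
      split_ifs <;> omega
  have hB : f ↥{x : Fin n | x ≠ v ∧ x ≠ w} ((Dgraph n).induce {x : Fin n | x ≠ v ∧ x ≠ w})
      = (S - S⁻¹) * pseq (n-3) := by
    set B : Set (Fin n) := {x : Fin n | x ≠ v ∧ x ≠ w} with hB'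
    have hmemB : ∀ x : Fin n, x ∈ B ↔ ((x:ℕ) ≠ n-1 ∧ (x:ℕ) ≠ 0) := by
      intro x
      simp only [hB', Set.mem_setOf_eq, hv, hw, ne_eq, Fin.ext_iff, Fin.val_mk]
    set s : Set ↥B := {y : ↥B | ((y : Fin n) : ℕ) = n-2} with hs'
    have hsep : ∀ x ∈ s, ∀ y ∉ s, ¬ ((Dgraph n).induce B).Adj x y := by
      intro x hx y hy hadj
      simp only [SimpleGraph.comap_adj, Function.Embedding.coe_subtype] at hadj
      rw [hDadj] at hadj
      have hyB := (hmemB _).mp y.2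
      simp only [hs', Set.mem_setOf_eq] at hx hy
      omega
    rw [hf.2.2.2 ↥B ((Dgraph n).induce B) (isAcyclic_induce hac _) s hsep]
    have hcard : Fintype.card ↥s = 1 := by
      refine Fintype.card_eq_one_iff.mpr ⟨⟨⟨⟨n-2, by omega⟩, (hmemB _).mpr (by simp; omega)⟩,
        by simp [hs']⟩, ?_⟩
      rintro ⟨⟨y, hyB⟩, hy⟩
      simp only [hs', Set.mem_setOf_eq] at hy
      exact Subtype.ext (Subtype.ext (Fin.ext (by simpa using hy)))
    have h1 := hf.2.1 ↥s (((Dgraph n).induce B).induce s) hcard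
    have hsc : f ↥sᶜ (((Dgraph n).induce B).induce sᶜ) = pseq (n-3) := by
      refine path_val f hf (n-3) _ _ (isAcyclic_induce (isAcyclic_induce hac _) _)
        (fun i => ⟨⟨⟨(i:ℕ)+1, by have := i.2; omega⟩,
            (hmemB _).mpr (by have := i.2; simp only [Fin.val_mk]; omega)⟩,
          by have := i.2; simp only [hs', Set.mem_compl_iff, Set.mem_setOf_eq, Fin.val_mk]; omega⟩)
        ⟨?_, ?_⟩ ?_
      · intro i j hij
        simp only [Subtype.mk.injEq, Fin.mk.injEq] at hij
        exact Fin.ext (by omega)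
      · rintro ⟨⟨y, hyB⟩, hy⟩
        have hyB' := (hmemB _).mp hyB
        have hylt := y.2
        simp only [hs', Set.mem_compl_iff, Set.mem_setOf_eq] at hy
        refine ⟨⟨(y:ℕ)-1, by omega⟩, Subtype.ext (Subtype.ext (Fin.ext ?_))⟩
        simp only [Fin.val_mk]
        omega
      · intro i j
        have hi := i.2; have hj := j.2
        simp only [SimpleGraph.comap_adj, Function.Embedding.coe_subtype]
        rw [hDadj]
        simp only [Fin.val_mk]
        omega
    exact congrArg₂ (· * ·) ((key _ _ _ _ _).trans h1) ((key _ _ _ _ _).trans hsc)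
  rw [(key _ _ _ _ _).trans hA, (key _ _ _ _ _).trans hB]
  obtain ⟨k, rfl⟩ : ∃ k, n = k+4 := ⟨n-4, by omega⟩
  have e1 : k+4-1 = k+3 := rfl
  have e3 : k+4-3 = k+1 := rfl
  rw [e1, e3]
  apply mul_left_cancel₀ SpS_ne_zero
  rw [mul_add, mul_left_comm _ (S - S⁻¹), pseq_closed, mul_left_comm _ (S - S⁻¹), pseq_closed]
  have hS := S_ne_zero
  simp only [T]
  simp only [inv_pow]
  field_simp
  ring
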